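/- If ψ_X(P) ↔ᵣ ψ_X(Q) for all X ⊆ A, then P ↔ᵣ Q (soundness of the reactive approximation axiom). -/

import Mathlib

/-- Actions of an LTS with time-outs. -/
inductive Act (A : Type*) where
  | vis (a : A)
  | tau
  | to

variable {A : Type*} {Proc : Type*}

/-- `Idle Tr P X` expresses `I(P) ∩ (X ∪ {τ}) = ∅`. -/
def Idle (Tr : Proc → Act A → Proc → Prop) (P : Proc) (X : Set A) : Prop :=
  (∀ a ∈ X, ∀ P', ¬ Tr P (Act.vis a) P') ∧ (∀ P', ¬ Tr P Act.tau P')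

/-- The state space is closed under environment operators `θ_X`, whose
transitions are exactly those generated by the three operational rules. -/
def ThetaSpec (Tr : Proc → Act A → Proc → Prop) (theta : Set A → Proc → Proc) : Prop :=
  ∀ (X : Set A) (P : Proc) (α : Act A) (Q : Proc),
    Tr (theta X P) α Q ↔
      ((α = Act.tau ∧ ∃ P', Tr P Act.tau P' ∧ Q = theta X P') ∨
       (∃ a, α = Act.vis a ∧ a ∈ X ∧ Tr P α Q) ∨
       (α ≠ Act.tau ∧ Idle Tr P X ∧ Tr P α Q))

/-- A strong time-out bisimulation. -/
def IsSTB (Tr : Proc → Act A → Proc → Prop) (theta : Set A → Proc → Proc)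
    (B : Proc → Proc → Prop) : Prop :=
  (∀ P Q, B P Q → B Q P) ∧
  (∀ P Q (α : Act A) P', B P Q → α ≠ Act.to → Tr P α P' →
      ∃ Q', Tr Q α Q' ∧ B P' Q') ∧
  (∀ P Q (X : Set A) P', B P Q → Idle Tr P X → Tr P Act.to P' →
      ∃ Q', Tr Q Act.to Q' ∧ B (theta X P') (theta X Q'))

/-- Strong reactive bisimilarity, characterised as the largest strong
time-out bisimulation. -/
def RBisimT (Tr : Proc → Act A → Proc → Prop) (theta : Set A → Proc → Proc)
    (P Q : Proc) : Prop :=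
  ∃ B, IsSTB Tr theta B ∧ B P Q

/-- A strong bisimulation (treating `τ` and `t` like any other action). -/
def IsSB (Tr : Proc → Act A → Proc → Prop) (B : Proc → Proc → Prop) : Prop :=
  (∀ P Q, B P Q → B Q P) ∧
  (∀ P Q (α : Act A) P', B P Q → Tr P α P' → ∃ Q', Tr Q α Q' ∧ B P' Q')

/-- Strong bisimilarity. -/
def SBisim (Tr : Proc → Act A → Proc → Prop) (P Q : Proc) : Prop :=
  ∃ B, IsSB Tr B ∧ B P Q

/-- Transitions of the operator `ψ_X` are exactly those generated by its two
operational rules. -/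
def PsiSpec (Tr : Proc → Act A → Proc → Prop) (theta : Set A → Proc → Proc)
    (psi : Set A → Proc → Proc) : Prop :=
  ∀ (X : Set A) (P : Proc) (α : Act A) (Q : Proc),
    Tr (psi X P) α Q ↔
      (α ≠ Act.to ∧ Tr P α Q) ∨
      (α = Act.to ∧ Idle Tr P X ∧ ∃ P', Tr P Act.to P' ∧ Q = theta X P')
section Aux
variable (Tr : Proc → Act A → Proc → Prop) (theta : Set A → Proc → Proc)

lemma aux_sbisim_isSB : IsSB Tr (SBisim Tr) := by
  constructor
  · rintro P Q ⟨B, hB, hPQ⟩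
    exact ⟨B, hB, hB.1 P Q hPQ⟩
  · rintro P Q α P' ⟨B, hB, hPQ⟩ hTr
    obtain ⟨Q', hQ', hB'⟩ := hB.2 P Q α P' hPQ hTr
    exact ⟨Q', hQ', B, hB, hB'⟩

lemma aux_sb_symm {P Q} (h : SBisim Tr P Q) : SBisim Tr Q P :=
  (aux_sbisim_isSB Tr).1 P Q h

lemma aux_sb_idle {P Q : Proc} {X : Set A} (h : SBisim Tr P Q) (hI : Idle Tr P X) :
    Idle Tr Q X := by
  have h' := aux_sb_symm Tr h
  constructor
  · intro a ha Q' hTr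
    obtain ⟨P', hP', -⟩ := (aux_sbisim_isSB Tr).2 Q P (Act.vis a) Q' h' hTr
    exact hI.1 a ha P' hP'
  · intro Q' hTr
    obtain ⟨P', hP', -⟩ := (aux_sbisim_isSB Tr).2 Q P Act.tau Q' h' hTr
    exact hI.2 P' hP'

lemma aux_sbisim_theta (hθ : ThetaSpec Tr theta) {P Q : Proc} {X : Set A}
    (h : SBisim Tr P Q) : SBisim Tr (theta X P) (theta X Q) := by
  refine ⟨fun x y => SBisim Tr x y ∨
      ∃ Y P0 Q0, SBisim Tr P0 Q0 ∧ x = theta Y P0 ∧ y = theta Y Q0,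
    ⟨?_, ?_⟩, Or.inr ⟨X, P, Q, h, rfl, rfl⟩⟩
  · rintro x y (hxy | ⟨Y, P0, Q0, hxy, rfl, rfl⟩)
    · exact Or.inl (aux_sb_symm Tr hxy)
    · exact Or.inr ⟨Y, Q0, P0, aux_sb_symm Tr hxy, rfl, rfl⟩
  · rintro x y α x' (hxy | ⟨Y, P0, Q0, hxy, rfl, rfl⟩) hTr
    · obtain ⟨y', hy', hB⟩ := (aux_sbisim_isSB Tr).2 x y α x' hxy hTr
      exact ⟨y', hy', Or.inl hB⟩
    · rw [hθ] at hTr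
      rcases hTr with ⟨rfl, P0', hP0', rfl⟩ | ⟨a, rfl, haY, hP0⟩ | ⟨hne, hIdle, hP0⟩
      · obtain ⟨Q0', hQ0', hB⟩ := (aux_sbisim_isSB Tr).2 P0 Q0 Act.tau P0' hxy hP0'
        exact ⟨theta Y Q0', (hθ _ _ _ _).2 (Or.inl ⟨rfl, Q0', hQ0', rfl⟩),
          Or.inr ⟨Y, P0', Q0', hB, rfl, rfl⟩⟩
      · obtain ⟨Q', hQ', hB⟩ := (aux_sbisim_isSB Tr).2 P0 Q0 _ x' hxy hP0
        exact ⟨Q', (hθ _ _ _ _).2 (Or.inr (Or.inl ⟨a, rfl, haY, hQ'⟩)), Or.inl hB⟩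
      · obtain ⟨Q', hQ', hB⟩ := (aux_sbisim_isSB Tr).2 P0 Q0 α x' hxy hP0
        exact ⟨Q', (hθ _ _ _ _).2 (Or.inr (Or.inr ⟨hne, aux_sb_idle Tr hxy hIdle, hQ'⟩)),
          Or.inl hB⟩

lemma aux_rbisim_isSTB : IsSTB Tr theta (RBisimT Tr theta) := by
  refine ⟨?_, ?_, ?_⟩
  · rintro P Q ⟨B, hB, hPQ⟩; exact ⟨B, hB, hB.1 P Q hPQ⟩
  · rintro P Q α P' ⟨B, hB, hPQ⟩ hα hTr
    obtain ⟨Q', h1, h2⟩ := hB.2.1 P Q α P' hPQ hα hTr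
    exact ⟨Q', h1, B, hB, h2⟩
  · rintro P Q X P' ⟨B, hB, hPQ⟩ hI hTr
    obtain ⟨Q', h1, h2⟩ := hB.2.2 P Q X P' hPQ hI hTr
    exact ⟨Q', h1, B, hB, h2⟩

lemma aux_idle_theta (hθ : ThetaSpec Tr theta) {P : Proc} {X : Set A} :
    Idle Tr (theta X P) X ↔ Idle Tr P X := by
  constructor
  · intro hI
    constructor
    · intro a ha P' hTr
      exact hI.1 a ha P' ((hθ X P _ P').2 (Or.inr (Or.inl ⟨a, rfl, ha, hTr⟩)))
    · intro P' hTr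
      exact hI.2 (theta X P') ((hθ X P _ _).2 (Or.inl ⟨rfl, P', hTr, rfl⟩))
  · intro hI
    constructor
    · intro a ha Q hTr
      rw [hθ] at hTr
      rcases hTr with ⟨hc, -⟩ | ⟨b, hb, hbX, hTr⟩ | ⟨-, -, hTr⟩
      · exact nomatch hc
      · injection hb with hab; subst hab; exact hI.1 a ha Q hTr
      · exact hI.1 a ha Q hTr
    · intro Q hTr
      rw [hθ] at hTr
      rcases hTr with ⟨-, P', hP', -⟩ | ⟨b, hb, -, -⟩ | ⟨-, -, hTr⟩
      · exact hI.2 P' hP'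
      · exact nomatch hb
      · exact hI.2 Q hTr

lemma aux_theta_theta (hθ : ThetaSpec Tr theta) (X : Set A) (P : Proc) :
    SBisim Tr (theta X (theta X P)) (theta X P) := by
  refine ⟨fun x y => x = y ∨
      (∃ Y R, x = theta Y (theta Y R) ∧ y = theta Y R) ∨
      (∃ Y R, y = theta Y (theta Y R) ∧ x = theta Y R),
    ⟨?_, ?_⟩, Or.inr (Or.inl ⟨X, P, rfl, rfl⟩)⟩
  · rintro x y (rfl | ⟨Y, R, rfl, rfl⟩ | ⟨Y, R, rfl, rfl⟩)
    · exact Or.inl rfl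
    · exact Or.inr (Or.inr ⟨Y, R, rfl, rfl⟩)
    · exact Or.inr (Or.inl ⟨Y, R, rfl, rfl⟩)
  · rintro x y α x' (rfl | ⟨Y, R, rfl, rfl⟩ | ⟨Y, R, rfl, rfl⟩) hTr
    · exact ⟨x', hTr, Or.inl rfl⟩
    · -- x = θθR, y = θR
      rw [hθ] at hTr
      rcases hTr with ⟨rfl, Z0, hZ0, rfl⟩ | ⟨a, rfl, haY, hZ⟩ | ⟨hne, hIdle, hZ⟩
      · -- Z0 is a τ-successor of θ R
        have hZ0' := hZ0
        rw [hθ] at hZ0'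
        rcases hZ0' with ⟨-, R', hR', rfl⟩ | ⟨b, hb, -, -⟩ | ⟨hc, -, -⟩
        · exact ⟨theta Y R', hZ0, Or.inr (Or.inl ⟨Y, R', rfl, rfl⟩)⟩
        · exact nomatch hb
        · exact absurd rfl hc
      · exact ⟨x', hZ, Or.inl rfl⟩
      · exact ⟨x', hZ, Or.inl rfl⟩
    · -- x = θR, y = θθR
      rw [hθ] at hTr
      rcases hTr with ⟨rfl, R', hR', rfl⟩ | ⟨a, rfl, haY, hZ⟩ | ⟨hne, hIdle, hZ⟩
      · refine ⟨theta Y (theta Y R'), (hθ _ _ _ _).2 (Or.inl ⟨rfl, theta Y R',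
          (hθ _ _ _ _).2 (Or.inl ⟨rfl, R', hR', rfl⟩), rfl⟩),
          Or.inr (Or.inr ⟨Y, R', rfl, rfl⟩)⟩
      · exact ⟨x', (hθ _ _ _ _).2 (Or.inr (Or.inl ⟨a, rfl, haY,
          (hθ _ _ _ _).2 (Or.inr (Or.inl ⟨a, rfl, haY, hZ⟩))⟩)), Or.inl rfl⟩
      · exact ⟨x', (hθ _ _ _ _).2 (Or.inr (Or.inr ⟨hne,
          (aux_idle_theta Tr theta hθ).2 hIdle,
          (hθ _ _ _ _).2 (Or.inr (Or.inr ⟨hne, hIdle, hZ⟩))⟩)), Or.inl rfl⟩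

lemma aux_sandwich (hθ : ThetaSpec Tr theta) {x x' y' y : Proc}
    (h1 : SBisim Tr x x') (h2 : RBisimT Tr theta x' y') (h3 : SBisim Tr y' y) :
    RBisimT Tr theta x y := by
  refine ⟨fun u v => ∃ u' v', SBisim Tr u u' ∧ RBisimT Tr theta u' v' ∧ SBisim Tr v' v,
    ⟨?_, ?_, ?_⟩, x', y', h1, h2, h3⟩
  · rintro u v ⟨u', v', hu, huv, hv⟩
    exact ⟨v', u', aux_sb_symm Tr hv, (aux_rbisim_isSTB Tr theta).1 u' v' huv,
      aux_sb_symm Tr hu⟩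
  · rintro u v α u1 ⟨u', v', hu, huv, hv⟩ hα hTr
    obtain ⟨u1', hu1', hB1⟩ := (aux_sbisim_isSB Tr).2 u u' α u1 hu hTr
    obtain ⟨v1', hv1', hB2⟩ := (aux_rbisim_isSTB Tr theta).2.1 u' v' α u1' huv hα hu1'
    obtain ⟨v1, hv1, hB3⟩ := (aux_sbisim_isSB Tr).2 v' v α v1' hv hv1'
    exact ⟨v1, hv1, u1', v1', hB1, hB2, hB3⟩
  · rintro u v X u1 ⟨u', v', hu, huv, hv⟩ hI hTr
    obtain ⟨u1', hu1', hB1⟩ := (aux_sbisim_isSB Tr).2 u u' Act.to u1 hu hTr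
    have hI' : Idle Tr u' X := aux_sb_idle Tr hu hI
    obtain ⟨v1', hv1', hB2⟩ := (aux_rbisim_isSTB Tr theta).2.2 u' v' X u1' huv hI' hu1'
    obtain ⟨v1, hv1, hB3⟩ := (aux_sbisim_isSB Tr).2 v' v Act.to v1' hv hv1'
    exact ⟨v1, hv1, theta X u1', theta X v1',
      aux_sbisim_theta Tr theta hθ hB1, hB2, aux_sbisim_theta Tr theta hθ hB3⟩

end Aux

/-- Soundness of the reactive approximation axiom:
if `ψ_X(P) ↔ᵣ ψ_X(Q)` for all `X ⊆ A`, then `P ↔ᵣ Q`. -/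
theorem reactive_approximation (Tr : Proc → Act A → Proc → Prop)
    (theta : Set A → Proc → Proc) (psi : Set A → Proc → Proc)
    (hθ : ThetaSpec Tr theta) (hψ : PsiSpec Tr theta psi)
    (P Q : Proc) (h : ∀ X : Set A, RBisimT Tr theta (psi X P) (psi X Q)) :
    RBisimT Tr theta P Q := by

  refine ⟨fun u v => RBisimT Tr theta u v ∨
      ∀ X : Set A, RBisimT Tr theta (psi X u) (psi X v), ⟨?_, ?_, ?_⟩, Or.inr h⟩
  · rintro u v (huv | huv)
    · exact Or.inl ((aux_rbisim_isSTB Tr theta).1 u v huv)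
    · exact Or.inr fun X => (aux_rbisim_isSTB Tr theta).1 _ _ (huv X)
  · rintro u v α u1 (huv | huv) hα hTr
    · obtain ⟨v1, hv1, hB⟩ := (aux_rbisim_isSTB Tr theta).2.1 u v α u1 huv hα hTr
      exact ⟨v1, hv1, Or.inl hB⟩
    · have hTr' : Tr (psi ∅ u) α u1 := (hψ ∅ u α u1).2 (Or.inl ⟨hα, hTr⟩)
      obtain ⟨v1, hv1, hB⟩ :=
        (aux_rbisim_isSTB Tr theta).2.1 (psi ∅ u) (psi ∅ v) α u1 (huv ∅) hα hTr'
      rw [hψ] at hv1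
      rcases hv1 with ⟨-, hv1⟩ | ⟨hc, -⟩
      · exact ⟨v1, hv1, Or.inl hB⟩
      · exact absurd hc hα
  · rintro u v X u1 (huv | huv) hI hTr
    · obtain ⟨v1, hv1, hB⟩ := (aux_rbisim_isSTB Tr theta).2.2 u v X u1 huv hI hTr
      exact ⟨v1, hv1, Or.inl hB⟩
    · -- ψ_X u  --t-->  θ_X u1
      have hTr' : Tr (psi X u) Act.to (theta X u1) :=
        (hψ X u Act.to (theta X u1)).2 (Or.inr ⟨rfl, hI, u1, hTr, rfl⟩)
      have hIψ : Idle Tr (psi X u) X := by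
        constructor
        · intro a ha W hW
          rw [hψ] at hW
          rcases hW with ⟨-, hW⟩ | ⟨hc, -⟩
          · exact hI.1 a ha W hW
          · exact nomatch hc
        · intro W hW
          rw [hψ] at hW
          rcases hW with ⟨-, hW⟩ | ⟨hc, -⟩
          · exact hI.2 W hW
          · exact nomatch hc
      obtain ⟨W, hW, hB⟩ := (aux_rbisim_isSTB Tr theta).2.2 (psi X u) (psi X v) X
        (theta X u1) (huv X) hIψ hTr'
      rw [hψ] at hW
      rcases hW with ⟨hc, -⟩ | ⟨-, hIv, v1, hv1, rfl⟩
      · exact absurd rfl hc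
      · refine ⟨v1, hv1, Or.inl ?_⟩
        exact aux_sandwich Tr theta hθ
          (aux_sb_symm Tr (aux_theta_theta Tr theta hθ X u1)) hB
          (aux_theta_theta Tr theta hθ X v1)
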